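/- arXiv:1103.0899 — 4 statements merged into one kernel-verified Lean document; each statement's English description precedes it below -/
import Mathlib

section
/- The ring C([-1,1]^n; ℝ) of continuous real-valued functions on the cube [-1,1]^n, with pointwise operations, is projective free. -/
/-- A commutative ring `R` is *projective free* if every finitely generated
projective `R`-module is free. -/
def ProjectiveFree (R : Type) [CommRing R] : Prop :=
  ∀ (M : Type) [AddCommGroup M] [Module R M],
    Module.Finite R M → Module.Projective R M → Module.Free R M

set_option linter.unusedSectionVars false

open scoped unitInterval

noncomputable section


section Similar
variable {A : Type*} [NormedRing A] [CompleteSpace A]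

/-- Two elements are similar if conjugate by a unit. -/
def MatSim (e f : A) : Prop := ∃ u : Aˣ, ↑u * e * ↑u⁻¹ = f

lemma matSim_refl (e : A) : MatSim e e := ⟨1, by simp⟩

lemma matSim_trans {e f g : A} (h1 : MatSim e f) (h2 : MatSim f g) : MatSim e g := by
  obtain ⟨u, rfl⟩ := h1
  obtain ⟨v, rfl⟩ := h2
  exact ⟨v * u, by simp [mul_assoc]⟩

lemma matSim_of_close {e f : A} (he : e * e = e) (hf : f * f = f)
    (h : ‖2 * f - 1‖ * ‖e - f‖ < 1) : MatSim e f := by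
  have hn : ‖-((2 * f - 1) * (e - f))‖ < 1 := by
    rw [norm_neg]
    exact (norm_mul_le _ _).trans_lt h
  set u := Units.oneSub _ hn with hu
  have huv : (u : A) = 1 + (2 * f - 1) * (e - f) := by
    rw [hu, Units.val_oneSub, sub_neg_eq_add]
  have hfe : f * (f * e) = f * e := by rw [← mul_assoc, hf]
  have l1 : (1 + (2 * f - 1) * (e - f)) * e = f * e := by
    rw [add_mul, one_mul, mul_assoc, sub_mul e f e, he, sub_mul, one_mul,
      mul_sub (2 * f), mul_assoc 2 f (f * e), hfe, ← mul_assoc 2 f e]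
    abel
  have l2 : f * (1 + (2 * f - 1) * (e - f)) = f * e := by
    have h2 : f * (2 * f - 1) = f := by
      rw [mul_sub, mul_one, show (2 : A) * f = f + f from two_mul f, mul_add, hf]
      abel
    rw [mul_add, mul_one, ← mul_assoc f (2 * f - 1) (e - f), h2, mul_sub, hf]
    abel
  have key : (u : A) * e = f * (u : A) := by rw [huv, l1, l2]
  refine ⟨u, ?_⟩
  calc (u : A) * e * ↑u⁻¹ = f * ↑u * ↑u⁻¹ := by rw [key]
    _ = f := by rw [mul_assoc, Units.mul_inv, mul_one]

lemma matSim_path (E : C(I, A)) (hE : ∀ t, E t * E t = E t) : MatSim (E 0) (E 1) := by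
  set S : Set I := {t | MatSim (E 0) (E t)} with hS
  have hcont : ∀ t₀ : I, Continuous fun s : I => ‖2 * E s - 1‖ * ‖E t₀ - E s‖ := by
    intro t₀
    fun_prop
  have hopen : IsOpen S := by
    rw [isOpen_iff_mem_nhds]
    intro t ht
    have h0 : ‖2 * E t - 1‖ * ‖E t - E t‖ < 1 := by simp
    have hev : ∀ᶠ s in nhds t, ‖2 * E s - 1‖ * ‖E t - E s‖ < 1 :=
      (((hcont t).continuousAt (x := t)).eventually_lt_const h0)
    filter_upwards [hev] with s hs
    exact matSim_trans ht (matSim_of_close (hE t) (hE s) hs)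
  have hclosed : IsClosed S := by
    rw [← isOpen_compl_iff, isOpen_iff_mem_nhds]
    intro t ht
    have h0 : ‖2 * E t - 1‖ * ‖E t - E t‖ < 1 := by simp
    have hev : ∀ᶠ s in nhds t, ‖2 * E t - 1‖ * ‖E s - E t‖ < 1 := by
      have hc : Continuous fun s : I => ‖2 * E t - 1‖ * ‖E s - E t‖ := by fun_prop
      simpa using (hc.continuousAt (x := t)).eventually_lt_const (by simpa using h0)
    filter_upwards [hev] with s hs hsS
    exact ht (matSim_trans hsS (matSim_of_close (hE s) (hE t) hs))
  have huniv : S = Set.univ := IsClopen.eq_univ ⟨hclosed, hopen⟩ ⟨0, matSim_refl _⟩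
  have : (1 : I) ∈ S := huniv ▸ Set.mem_univ _
  exact this
end Similar

section Phi
variable {X : Type} [TopologicalSpace X] {k : ℕ}


/-- Evaluation ring hom on continuous functions. -/
def evalRH (x : X) : C(X, ℝ) →+* ℝ where
  toFun f := f x
  map_one' := rfl
  map_mul' _ _ := rfl
  map_zero' := rfl
  map_add' _ _ := rfl

/-- Matrices over `C(X,ℝ)` are continuous matrix-valued functions. -/
def matCM (X : Type) [TopologicalSpace X] (k : ℕ) :
    Matrix (Fin k) (Fin k) C(X, ℝ) ≃+* C(X, Matrix (Fin k) (Fin k) ℝ) where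
  toFun A := ⟨fun x => (evalRH x).mapMatrix A,
    continuous_pi fun i => continuous_pi fun j => (A i j).continuous⟩
  invFun F := Matrix.of fun i j => ⟨fun x => F x i j,
    by have : Continuous fun m : Matrix (Fin k) (Fin k) ℝ => m i j := (continuous_apply j).comp (continuous_apply i); exact this.comp F.continuous⟩
  left_inv A := by ext i j x; rfl
  right_inv F := by ext x i j; rfl
  map_mul' A B := by ext x i j; simp [evalRH, Matrix.mul_apply, RingHom.mapMatrix_apply, Matrix.map_apply]
  map_add' A B := by ext x i j; simp [evalRH, RingHom.mapMatrix_apply, Matrix.map_apply]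

lemma matCM_apply (A : Matrix (Fin k) (Fin k) C(X, ℝ)) (x : X) (i j : Fin k) :
    (matCM X k A) x i j = A i j x := rfl
end Phi

section Core

attribute [local instance] Matrix.linftyOpNormedRing

abbrev Cube (n : ℕ) := Fin n → Set.Icc (-1 : ℝ) 1

variable {n k : ℕ}

/-- Scaling the cube towards the origin. -/
def scaleMap (n : ℕ) : C(I × Cube n, Cube n) where
  toFun p i := ⟨(p.1 : ℝ) * (p.2 i : ℝ), by
    obtain ⟨ht0, ht1⟩ := p.1.2
    obtain ⟨hx0, hx1⟩ := (p.2 i).2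
    constructor <;> nlinarith⟩
  continuous_toFun := by
    apply continuous_pi
    intro i
    apply Continuous.subtype_mk
    exact (continuous_subtype_val.comp continuous_fst).mul
      ((continuous_subtype_val.comp ((continuous_apply i).comp continuous_snd)))

/-- the center of the cube -/
def cubeCenter (n : ℕ) : Cube n := fun _ => ⟨0, by norm_num⟩

lemma exists_const_conj (e : Matrix (Fin k) (Fin k) C(Cube n, ℝ)) (he : e * e = e) :
    ∃ (m : Matrix (Fin k) (Fin k) ℝ) (u : (Matrix (Fin k) (Fin k) C(Cube n, ℝ))ˣ),
      m * m = m ∧ (u : Matrix (Fin k) (Fin k) C(Cube n, ℝ)) * (m.map (algebraMap ℝ C(Cube n, ℝ))) * ((u⁻¹ : _ˣ) : Matrix (Fin k) (Fin k) C(Cube n, ℝ)) = e := by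
  set Φ := matCM (Cube n) k with hΦ
  set ε := Φ e with hε
  have hεidem : ε * ε = ε := by rw [hε, ← map_mul, he]
  set E : C(I, C(Cube n, Matrix (Fin k) (Fin k) ℝ)) := (ε.comp (scaleMap n)).curry with hE
  have hEt : ∀ t, E t * E t = E t := by
    intro t
    refine ContinuousMap.ext fun x => ?_
    show E t x * E t x = E t x
    have h1 : E t x = ε (scaleMap n (t, x)) := rfl
    rw [h1, ← ContinuousMap.mul_apply, hεidem]
  have hsim : ∃ u : (C(Cube n, Matrix (Fin k) (Fin k) ℝ))ˣ, ↑u * E 0 * ↑u⁻¹ = E 1 := by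
    letI : NormedRing C(Cube n, Matrix (Fin k) (Fin k) ℝ) := ContinuousMap.instNormedRing
    haveI : @CompleteSpace C(Cube n, Matrix (Fin k) (Fin k) ℝ) this.toUniformSpace := by
      exact (ContinuousMap.instCompleteSpaceOfCompactlyCoherentSpace : CompleteSpace C(Cube n, Matrix (Fin k) (Fin k) ℝ))
    exact matSim_path E hEt
  set m : Matrix (Fin k) (Fin k) ℝ := (evalRH (cubeCenter n)).mapMatrix e with hm
  have hE1 : E 1 = ε := by
    refine ContinuousMap.ext fun x => ?_
    show ε (scaleMap n (1, x)) = ε x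
    congr 1
    funext i
    exact Subtype.ext (by simp [scaleMap])
  have hE0 : E 0 = Φ (m.map (algebraMap ℝ C(Cube n, ℝ))) := by
    refine ContinuousMap.ext fun x => ?_
    show ε (scaleMap n (0, x)) = _
    have hc : scaleMap n (0, x) = cubeCenter n := by
      funext i
      exact Subtype.ext (by simp [scaleMap, cubeCenter])
    rw [hc, hε]
    funext i j
    rw [matCM_apply, matCM_apply]
    simp [hm, evalRH, RingHom.mapMatrix_apply, Matrix.map_apply]
    rfl
  have hmidem : m * m = m := by rw [hm, ← map_mul, he]
  obtain ⟨u', hu'⟩ := hsim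
  refine ⟨m, Units.map (Φ.symm.toRingHom.toMonoidHom) u', hmidem, ?_⟩
  have := congrArg Φ.symm hu'
  simp only [map_mul] at this
  rw [hE0, hE1, RingEquiv.symm_apply_apply, hε, RingEquiv.symm_apply_apply] at this
  rw [Units.coe_map_inv]
  simpa [Units.coe_map] using this
end Core

section Diag
variable {S : Type*} [CommRing S] {k : ℕ} (P : Fin k → Prop) [DecidablePred P]

/-- Extension by zero. -/
def extZero (S : Type*) [CommRing S] {k : ℕ} (P : Fin k → Prop) [DecidablePred P] :
    ({i : Fin k // P i} → S) →ₗ[S] (Fin k → S) where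
  toFun v i := if h : P i then v ⟨i, h⟩ else 0
  map_add' v w := by funext i; by_cases h : P i <;> simp [h]
  map_smul' c v := by funext i; by_cases h : P i <;> simp [h]

lemma extZero_injective : Function.Injective (extZero S P) := by
  intro v w h
  funext i
  have := congrFun h i.1
  simpa [extZero, i.2] using this

/-- The standard diagonal idempotent. -/
def diagIdem (S : Type*) [CommRing S] {k : ℕ} (P : Fin k → Prop) [DecidablePred P] :
    Matrix (Fin k) (Fin k) S :=
  Matrix.diagonal (fun i => if P i then (1 : S) else 0)

lemma diagIdem_idem : diagIdem S P * diagIdem S P = diagIdem S P := by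
  have hfun : (fun i => (if P i then (1 : S) else 0) * (if P i then (1 : S) else 0))
      = fun i => if P i then (1 : S) else 0 := by
    funext i; by_cases h : P i <;> simp [h]
  rw [diagIdem, Matrix.diagonal_mul_diagonal, hfun]

lemma range_diagIdem :
    LinearMap.range (Matrix.toLinAlgEquiv' (diagIdem S P) : (Fin k → S) →ₗ[S] (Fin k → S))
      = LinearMap.range (extZero S P) := by
  apply le_antisymm
  · rintro _ ⟨w, rfl⟩
    refine ⟨fun j => w j.1, ?_⟩
    funext i
    simp only [extZero, LinearMap.coe_mk, AddHom.coe_mk, Matrix.toLinAlgEquiv'_apply, diagIdem,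
      Matrix.mulVec_diagonal]
    by_cases h : P i <;> simp [h]
  · rintro _ ⟨v, rfl⟩
    refine ⟨extZero S P v, ?_⟩
    funext i
    simp only [extZero, LinearMap.coe_mk, AddHom.coe_mk, Matrix.toLinAlgEquiv'_apply, diagIdem,
      Matrix.mulVec_diagonal]
    by_cases h : P i <;> simp [h]

/-- The range of the standard diagonal idempotent is a free module. -/
noncomputable def diagRangeEquiv :
    ({i : Fin k // P i} → S) ≃ₗ[S]
      LinearMap.range (Matrix.toLinAlgEquiv' (diagIdem S P) : (Fin k → S) →ₗ[S] (Fin k → S)) :=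
  (LinearEquiv.ofInjective (extZero S P) (extZero_injective P)).trans
    (LinearEquiv.ofEq _ _ (range_diagIdem P).symm)

/-- Conjugate matrices have linearly equivalent ranges. -/
noncomputable def rangeConjEquiv {a b : Matrix (Fin k) (Fin k) S}
    (u : (Matrix (Fin k) (Fin k) S)ˣ)
    (h : (u : Matrix (Fin k) (Fin k) S) * a * ((u⁻¹ : _ˣ) : Matrix (Fin k) (Fin k) S) = b) :
    (LinearMap.range (Matrix.toLinAlgEquiv' a : (Fin k → S) →ₗ[S] (Fin k → S))) ≃ₗ[S]
      (LinearMap.range (Matrix.toLinAlgEquiv' b : (Fin k → S) →ₗ[S] (Fin k → S))) := by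
  set Ψ := Matrix.toLinAlgEquiv' (R := S) (n := Fin k)
  set uE : ((Fin k → S) →ₗ[S] (Fin k → S))ˣ :=
    Units.map (Ψ : Matrix (Fin k) (Fin k) S →* ((Fin k → S) →ₗ[S] (Fin k → S))) u with huE
  set sig : (Fin k → S) ≃ₗ[S] (Fin k → S) :=
    LinearMap.GeneralLinearGroup.generalLinearEquiv S (Fin k → S) uE with hsig
  have hsigcoe : sig.toLinearMap = Ψ (u : Matrix (Fin k) (Fin k) S) := by
    rw [hsig, LinearMap.GeneralLinearGroup.generalLinearEquiv_to_linearMap]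
    rfl
  have hsigsymm : sig.symm.toLinearMap = Ψ ((u⁻¹ : _ˣ) : Matrix (Fin k) (Fin k) S) := by
    have : sig.symm = LinearMap.GeneralLinearGroup.generalLinearEquiv S (Fin k → S) uE⁻¹ := by
      rw [hsig, map_inv]
      rfl
    rw [this, LinearMap.GeneralLinearGroup.generalLinearEquiv_to_linearMap]
    rfl
  have hb : Ψ b = sig.toLinearMap ∘ₗ Ψ a ∘ₗ sig.symm.toLinearMap := by
    rw [hsigcoe, hsigsymm, ← h, map_mul, map_mul, Module.End.mul_eq_comp, Module.End.mul_eq_comp,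
      LinearMap.comp_assoc]
  have hrange : LinearMap.range (Ψ b)
      = Submodule.map (sig : (Fin k → S) →ₗ[S] Fin k → S) (LinearMap.range (Ψ a)) := by
    rw [hb, LinearMap.range_comp, LinearMap.range_comp, LinearEquiv.range, Submodule.map_top]
  exact (LinearEquiv.submoduleMap sig _).trans (LinearEquiv.ofEq _ _ hrange.symm)
end Diag

section Field
variable {k : ℕ}

set_option maxHeartbeats 1000000 in
lemma exists_conj_diagIdem (m : Matrix (Fin k) (Fin k) ℝ) (hm : m * m = m) :
    ∃ (P : Fin k → Prop) (_ : DecidablePred P) (w : (Matrix (Fin k) (Fin k) ℝ)ˣ),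
      (w : Matrix (Fin k) (Fin k) ℝ) * m * ((w⁻¹ : _ˣ) : Matrix (Fin k) (Fin k) ℝ)
        = diagIdem ℝ P := by
  classical
  set Ψ := Matrix.toLinAlgEquiv' (R := ℝ) (n := Fin k) with hΨ
  set μ : (Fin k → ℝ) →ₗ[ℝ] (Fin k → ℝ) := Ψ m with hμ
  have hμidem : μ ∘ₗ μ = μ := by
    rw [hμ, ← Module.End.mul_eq_comp, ← map_mul, hm]
  set r := Module.finrank ℝ (LinearMap.range μ) with hr
  set P : Fin k → Prop := fun i => (i : ℕ) < r with hP
  set π : (Fin k → ℝ) →ₗ[ℝ] (Fin k → ℝ) := Ψ (diagIdem ℝ P) with hπ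
  have hπidem : π ∘ₗ π = π := by
    rw [hπ, ← Module.End.mul_eq_comp, ← map_mul, diagIdem_idem]
  -- idempotents are projections onto their ranges
  have proj_of_idem : ∀ (f : (Fin k → ℝ) →ₗ[ℝ] (Fin k → ℝ)), f ∘ₗ f = f →
      LinearMap.IsProj (LinearMap.range f) f := by
    intro f hf
    obtain ⟨p, hp⟩ := (LinearMap.isProj_iff_isIdempotentElem f).mpr hf
    have hpr : p = LinearMap.range f := by
      apply le_antisymm
      · intro x hx
        exact ⟨x, hp.2 x hx⟩
      · rintro _ ⟨x, rfl⟩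
        exact hp.1 x
    exact hpr ▸ hp
  have hμproj := proj_of_idem μ hμidem
  have hπproj := proj_of_idem π hπidem
  have hcμ : IsCompl (LinearMap.range μ) (LinearMap.ker μ) := hμproj.isCompl
  have hcπ : IsCompl (LinearMap.range π) (LinearMap.ker π) := hπproj.isCompl
  -- rank computations
  have hrk : r ≤ k := by
    have := Submodule.finrank_le (LinearMap.range μ)
    simpa [Module.finrank_fintype_fun_eq_card] using this
  have hcard : Fintype.card {i : Fin k // P i} = r := by
    have : Fintype.card {i : Fin k // P i} = Fintype.card (Fin r) := by
      apply Fintype.card_congr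
      exact ⟨fun i => ⟨i.1, i.2⟩, fun j => ⟨⟨j.1, lt_of_lt_of_le j.2 hrk⟩, j.2⟩,
        fun i => rfl, fun j => rfl⟩
    simpa using this
  have hrankπ : Module.finrank ℝ (LinearMap.range π) = r := by
    have := (diagRangeEquiv (S := ℝ) P).finrank_eq
    rw [← this, Module.finrank_fintype_fun_eq_card, hcard]
  have hkerμ : Module.finrank ℝ (LinearMap.ker μ)
      = Module.finrank ℝ (LinearMap.ker π) := by
    have h1 := LinearMap.finrank_range_add_finrank_ker μ
    have h2 := LinearMap.finrank_range_add_finrank_ker π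
    rw [hrankπ] at h2
    rw [← hr] at h1
    omega
  set sigp : LinearMap.range μ ≃ₗ[ℝ] LinearMap.range π :=
    LinearEquiv.ofFinrankEq _ _ (by rw [hrankπ, ← hr]) with hsigp
  set sigq : LinearMap.ker μ ≃ₗ[ℝ] LinearMap.ker π :=
    LinearEquiv.ofFinrankEq _ _ hkerμ with hsigq
  set φ : (Fin k → ℝ) ≃ₗ[ℝ] (Fin k → ℝ) :=
    ((Submodule.prodEquivOfIsCompl _ _ hcμ).symm.trans (sigp.prodCongr sigq)).trans
      (Submodule.prodEquivOfIsCompl _ _ hcπ) with hφ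
  have key : φ.toLinearMap ∘ₗ μ = π ∘ₗ φ.toLinearMap := by
    apply LinearMap.ext
    intro v
    obtain ⟨⟨a, b⟩, rfl⟩ := (Submodule.prodEquivOfIsCompl _ _ hcμ).surjective v
    have hab : Submodule.prodEquivOfIsCompl _ _ hcμ (a, b) = (a : Fin k → ℝ) + b :=
      Submodule.coe_prodEquivOfIsCompl' _ _ hcμ (a, b)
    have hφab : φ (Submodule.prodEquivOfIsCompl _ _ hcμ (a, b))
        = (sigp a : Fin k → ℝ) + (sigq b : Fin k → ℝ) := by
      rw [hφ]
      simp only [LinearEquiv.trans_apply, LinearEquiv.symm_apply_apply, LinearEquiv.prodCongr_apply]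
      exact Submodule.coe_prodEquivOfIsCompl' _ _ hcπ _
    have hμa : μ (a : Fin k → ℝ) = a := hμproj.2 _ a.2
    have hμb : μ (b : Fin k → ℝ) = 0 := b.2
    have hπa : π ((sigp a : Fin k → ℝ)) = sigp a := hπproj.2 _ (sigp a).2
    have hπb : π ((sigq b : Fin k → ℝ)) = 0 := (sigq b).2
    simp only [LinearMap.comp_apply]
    rw [hab] at hφab
    show φ (μ ((a : Fin k → ℝ) + b)) = π (φ ((a : Fin k → ℝ) + b))
    rw [map_add μ, hμa, hμb, add_zero, hφab, map_add, hπa, hπb, add_zero]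
    -- φ a  = sigp a
    have : φ ((a : Fin k → ℝ)) = sigp a := by
      have ha0 : Submodule.prodEquivOfIsCompl _ _ hcμ (a, 0) = (a : Fin k → ℝ) := by
        rw [Submodule.coe_prodEquivOfIsCompl' _ _ hcμ (a, 0)]
        simp
      rw [← ha0, hφ]
      simp only [LinearEquiv.trans_apply, LinearEquiv.symm_apply_apply, LinearEquiv.prodCongr_apply]
      rw [Submodule.coe_prodEquivOfIsCompl' _ _ hcπ _]
      simp
    rw [this]
  -- package φ as a unit on the matrix side
  set uE : ((Fin k → ℝ) →ₗ[ℝ] (Fin k → ℝ))ˣ :=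
    ⟨φ.toLinearMap, φ.symm.toLinearMap,
      by rw [Module.End.mul_eq_comp]; ext v; simp,
      by rw [Module.End.mul_eq_comp]; ext v; simp⟩ with huE
  refine ⟨P, inferInstance, Units.map Ψ.symm.toAlgHom.toRingHom.toMonoidHom uE, ?_⟩
  have hconj : φ.toLinearMap ∘ₗ μ ∘ₗ φ.symm.toLinearMap = π := by
    have hid : φ.toLinearMap ∘ₗ φ.symm.toLinearMap = LinearMap.id := by ext v; simp
    rw [← LinearMap.comp_assoc, key, LinearMap.comp_assoc, hid, LinearMap.comp_id]
  apply Ψ.injective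
  rw [map_mul, map_mul, Units.coe_map, Units.coe_map_inv]
  have h1 : (Ψ.symm.toAlgHom.toRingHom.toMonoidHom ((uE : _)) : Matrix (Fin k) (Fin k) ℝ)
      = Ψ.symm φ.toLinearMap := rfl
  have h2 : (Ψ.symm.toAlgHom.toRingHom.toMonoidHom (((uE⁻¹ : _ˣ) : _)) : Matrix (Fin k) (Fin k) ℝ)
      = Ψ.symm φ.symm.toLinearMap := rfl
  rw [h1, h2, AlgEquiv.apply_symm_apply, AlgEquiv.apply_symm_apply, ← hμ, ← hπ,
    Module.End.mul_eq_comp, Module.End.mul_eq_comp, LinearMap.comp_assoc, hconj]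
end Field

/-- The ring `C([-1,1]^n; ℝ)` of continuous real-valued functions on the cube
`[-1,1]^n`, with pointwise operations, is projective free. -/
theorem projectiveFree_continuousMap_cube (n : ℕ) :
    ProjectiveFree C((Fin n → (Set.Icc (-1 : ℝ) 1)), ℝ) := by
  intro M _ _ hfin hproj
  classical
  obtain ⟨k, g, hg⟩ := Module.Finite.exists_fin' C(Cube n, ℝ) M
  obtain ⟨s, hs⟩ := Module.projective_lifting_property g LinearMap.id hg
  set e : (Fin k → C(Cube n, ℝ)) →ₗ[C(Cube n, ℝ)] (Fin k → C(Cube n, ℝ)) := s ∘ₗ g with he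
  have hgs : ∀ v, g (s v) = v := by
    intro v
    have := LinearMap.congr_fun hs v
    simpa using this
  have heidem : e ∘ₗ e = e := by
    rw [he]
    ext v
    simp [hgs]
  have hsinj : Function.Injective s := by
    intro a b hab
    rw [← hgs a, ← hgs b, hab]
  have hre : LinearMap.range s = LinearMap.range e := by
    apply le_antisymm
    · rintro _ ⟨v, rfl⟩
      exact ⟨s v, by simp [he, hgs]⟩
    · rw [he]
      exact LinearMap.range_comp_le_range g s
  set Ψ := Matrix.toLinAlgEquiv' (R := C(Cube n, ℝ)) (n := Fin k) with hΨ
  set A := Ψ.symm e with hA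
  have hΨA : Ψ A = e := by rw [hA]; exact Ψ.apply_symm_apply e
  have hAidem : A * A = A := by
    apply Ψ.injective
    rw [map_mul, hΨA, Module.End.mul_eq_comp, heidem]
  obtain ⟨m, u, hmidem, hu⟩ := exists_const_conj A hAidem
  obtain ⟨P, hPdec, w, hw⟩ := exists_conj_diagIdem m hmidem
  set ρ := (algebraMap ℝ C(Cube n, ℝ)).mapMatrix (m := Fin k) with hρ
  set W := Units.map ρ.toMonoidHom w with hWdef
  have hWrel : (W : Matrix (Fin k) (Fin k) C(Cube n, ℝ))
      * (m.map (algebraMap ℝ C(Cube n, ℝ)))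
      * (((W⁻¹ : _ˣ)) : Matrix (Fin k) (Fin k) C(Cube n, ℝ)) = diagIdem C(Cube n, ℝ) P := by
    have hcg := congrArg ρ hw
    rw [map_mul, map_mul] at hcg
    have hd : ρ (diagIdem ℝ P) = diagIdem C(Cube n, ℝ) P := by
      rw [hρ, RingHom.mapMatrix_apply, diagIdem, Matrix.diagonal_map (map_zero _), diagIdem]
      congr 1
      funext i
      by_cases h : P i <;> simp [h]
    rw [hWdef, Units.coe_map, Units.coe_map_inv]
    show ρ ↑w * m.map (⇑(algebraMap ℝ C(Cube n, ℝ))) * ρ ↑w⁻¹ = diagIdem C(Cube n, ℝ) P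
    rw [show m.map (⇑(algebraMap ℝ C(Cube n, ℝ))) = ρ m from rfl, hcg, hd]
  have hm' : (((W⁻¹ : _ˣ)) : Matrix (Fin k) (Fin k) C(Cube n, ℝ)) * diagIdem C(Cube n, ℝ) P
      * (W : Matrix (Fin k) (Fin k) C(Cube n, ℝ))
      = m.map (algebraMap ℝ C(Cube n, ℝ)) := by
    rw [← hWrel]
    simp [mul_assoc, Units.inv_mul_cancel_left, Units.inv_mul]
  have hv : (↑(u * W⁻¹) : Matrix (Fin k) (Fin k) C(Cube n, ℝ)) * diagIdem C(Cube n, ℝ) P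
      * ((((u * W⁻¹)⁻¹ : _ˣ)) : Matrix (Fin k) (Fin k) C(Cube n, ℝ)) = A := by
    simp only [mul_inv_rev, inv_inv, Units.val_mul]
    calc (↑u : Matrix (Fin k) (Fin k) C(Cube n, ℝ)) * ↑W⁻¹ * diagIdem C(Cube n, ℝ) P
          * (↑W * ↑u⁻¹)
        = ↑u * ((((W⁻¹ : _ˣ)) : Matrix (Fin k) (Fin k) C(Cube n, ℝ)) * diagIdem C(Cube n, ℝ) P
            * (W : Matrix (Fin k) (Fin k) C(Cube n, ℝ))) * ↑u⁻¹ := by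
          simp only [mul_assoc]
      _ = A := by rw [hm', hu]
  have E1 : M ≃ₗ[C(Cube n, ℝ)] LinearMap.range s := LinearEquiv.ofInjective s hsinj
  have E2 : LinearMap.range s
      = LinearMap.range (Matrix.toLinAlgEquiv' A
          : (Fin k → C(Cube n, ℝ)) →ₗ[C(Cube n, ℝ)] (Fin k → C(Cube n, ℝ))) := by
    rw [← hΨ, hΨA, hre]
  have E3 := rangeConjEquiv (u * W⁻¹) hv
  have E4 := diagRangeEquiv (S := C(Cube n, ℝ)) P
  exact Module.Free.of_equiv
    ((E4.trans E3).trans ((LinearEquiv.ofEq _ _ E2.symm).trans E1.symm))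

end
end

section
/- The ring C_r(cl(𝔻)^n; ℂ) = {f : cl(𝔻)^n → ℂ : f continuous and f(z) = conj(f(conj(z))) for all z ∈ cl(𝔻)^n} of real symmetric continuous functions on the closed polydisc, with pointwise operations, is projective free. -/
set_option synthInstance.maxHeartbeats 1000000
set_option maxHeartbeats 1000000
set_option linter.unusedVariables false
set_option linter.unusedSectionVars false

/-- The closed unit polydisc in `ℂⁿ`, as a type. -/
def ClosedPolydisc (n : ℕ) : Type := { z : Fin n → ℂ // ∀ j, ‖z j‖ ≤ 1 }

noncomputable instance (n : ℕ) : TopologicalSpace (ClosedPolydisc n) :=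
  instTopologicalSpaceSubtype

/-- Componentwise complex conjugation on the closed polydisc. -/
def polyConj {n : ℕ} (z : ClosedPolydisc n) : ClosedPolydisc n :=
  ⟨fun j => starRingEnd ℂ (z.1 j), fun j => by
    simpa using z.2 j⟩

/-- The real symmetric continuous functions on the closed polydisc, as a subring of
`C(cl(𝔻)ⁿ, ℂ)`. -/
noncomputable def realSymmC (n : ℕ) : Subring C(ClosedPolydisc n, ℂ) where
  carrier := { f | ∀ z, f z = starRingEnd ℂ (f (polyConj z)) }
  mul_mem' := by
    intro f g hf hg z
    simp only [ContinuousMap.mul_apply, map_mul]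
    rw [hf z, hg z]
  one_mem' := by intro z; simp
  add_mem' := by
    intro f g hf hg z
    simp only [ContinuousMap.add_apply, map_add]
    rw [hf z, hg z]
  zero_mem' := by intro z; simp
  neg_mem' := by
    intro f hf z
    simp only [ContinuousMap.neg_apply, map_neg]
    rw [hf z]

/-! ### Generic algebra lemmas -/

namespace PFhelp

section Alg
variable {R : Type} [CommRing R]

/-- Step A: a finite projective module is isomorphic to the range of an idempotent matrix. -/
theorem finite_projective_iso_range (M : Type) [AddCommGroup M] [Module R M]
    (hfin : Module.Finite R M) (hproj : Module.Projective R M) :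
    ∃ (k : ℕ) (e : Matrix (Fin k) (Fin k) R), e * e = e ∧
      Nonempty (M ≃ₗ[R] LinearMap.range e.mulVecLin) := by
  obtain ⟨k, π, hπ⟩ := Module.Finite.exists_fin' R M
  obtain ⟨s, hs⟩ := π.exists_rightInverse_of_surjective (LinearMap.range_eq_top.mpr hπ)
  have hπs : ∀ m, π (s m) = m := fun m => congrFun (congrArg (fun g => g.toFun) hs) m
  set f : (Fin k → R) →ₗ[R] (Fin k → R) := s ∘ₗ π with hf
  have hff : ∀ x, f (f x) = f x := by
    intro x; simp only [hf, LinearMap.comp_apply, hπs]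
  refine ⟨k, LinearMap.toMatrix' f, ?_, ?_⟩
  · rw [← LinearMap.toMatrix'_comp]
    exact congrArg _ (LinearMap.ext hff)
  · have hrange : (LinearMap.toMatrix' f).mulVecLin = f := by
      rw [← Matrix.toLin'_apply', Matrix.toLin'_toMatrix']
    rw [hrange]
    refine ⟨LinearEquiv.ofLinear
      (LinearMap.codRestrict (LinearMap.range f) s
        (fun m => ⟨s m, by simp [hf, LinearMap.comp_apply, hπs]⟩))
      (π.comp (LinearMap.range f).subtype) ?_ ?_⟩
    · refine LinearMap.ext fun x => Subtype.ext ?_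
      obtain ⟨y, hy⟩ := x.2
      simp only [LinearMap.comp_apply, LinearMap.codRestrict_apply, LinearMap.id_apply,
        Submodule.subtype_apply]
      show f _ = _
      rw [← hy, hff y]
    · exact LinearMap.ext fun m => by
        simp [LinearMap.comp_apply, hπs, LinearMap.codRestrict_apply]
        exact hπs m

/-- Step B: similar idempotent matrices have isomorphic ranges. -/
theorem range_iso_of_similar {k : ℕ} {e f : Matrix (Fin k) (Fin k) R}
    (u : (Matrix (Fin k) (Fin k) R)ˣ)
    (h : (u : Matrix (Fin k) (Fin k) R) * e = f * (u : Matrix (Fin k) (Fin k) R)) :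
    Nonempty (LinearMap.range e.mulVecLin ≃ₗ[R] LinearMap.range f.mulVecLin) := by
  have h' : (↑u⁻¹ : Matrix (Fin k) (Fin k) R) * f = e * (↑u⁻¹ : Matrix (Fin k) (Fin k) R) := by
    have := congrArg (fun x => (↑u⁻¹ : Matrix (Fin k) (Fin k) R) * x *
      (↑u⁻¹ : Matrix (Fin k) (Fin k) R)) h
    simpa [mul_assoc, Units.inv_mul, Units.mul_inv, ← mul_assoc] using this.symm
  have fwd : ∀ x ∈ LinearMap.range e.mulVecLin,
      (↑u : Matrix (Fin k) (Fin k) R).mulVec x ∈ LinearMap.range f.mulVecLin := by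
    rintro x ⟨y, rfl⟩
    exact ⟨(↑u : Matrix (Fin k) (Fin k) R).mulVec y, by
      simp only [Matrix.mulVecLin_apply, Matrix.mulVec_mulVec, h]⟩
  have bwd : ∀ x ∈ LinearMap.range f.mulVecLin,
      (↑u⁻¹ : Matrix (Fin k) (Fin k) R).mulVec x ∈ LinearMap.range e.mulVecLin := by
    rintro x ⟨y, rfl⟩
    exact ⟨(↑u⁻¹ : Matrix (Fin k) (Fin k) R).mulVec y, by
      simp only [Matrix.mulVecLin_apply, Matrix.mulVec_mulVec, h']⟩
  refine ⟨LinearEquiv.ofLinear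
    (LinearMap.codRestrict _ ((↑u : Matrix (Fin k) (Fin k) R).mulVecLin.comp
      (LinearMap.range e.mulVecLin).subtype) (fun x => fwd x.1 x.2))
    (LinearMap.codRestrict _ ((↑u⁻¹ : Matrix (Fin k) (Fin k) R).mulVecLin.comp
      (LinearMap.range f.mulVecLin).subtype) (fun x => bwd x.1 x.2)) ?_ ?_⟩
  · refine LinearMap.ext fun x => Subtype.ext ?_
    show (↑u : Matrix (Fin k) (Fin k) R).mulVec
      ((↑u⁻¹ : Matrix (Fin k) (Fin k) R).mulVec (x : Fin k → R)) = (x : Fin k → R)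
    rw [Matrix.mulVec_mulVec, Units.mul_inv, Matrix.one_mulVec]
  · refine LinearMap.ext fun x => Subtype.ext ?_
    show (↑u⁻¹ : Matrix (Fin k) (Fin k) R).mulVec
      ((↑u : Matrix (Fin k) (Fin k) R).mulVec (x : Fin k → R)) = (x : Fin k → R)
    rw [Matrix.mulVec_mulVec, Units.inv_mul, Matrix.one_mulVec]

end Alg

/-- Step C: if `c : ℝ →+* S` lifts linear independence, the range of a matrix with entries
in the image of `c` is a free `S`-module. -/
theorem range_map_free {S : Type} [CommRing S] (c : ℝ →+* S) {k : ℕ}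
    (F : Matrix (Fin k) (Fin k) ℝ)
    (hind : ∀ (m : ℕ) (v : Fin m → (Fin k → ℝ)), LinearIndependent ℝ v →
      ∀ a : Fin m → S, (∑ i, a i • (fun j => c (v i j))) = 0 → ∀ i, a i = 0) :
    Module.Free S (LinearMap.range (F.map c).mulVecLin) := by
  classical
  set V : Submodule ℝ (Fin k → ℝ) := LinearMap.range F.mulVecLin with hV
  have : Module.Finite ℝ V := by infer_instance
  set r : ℕ := Module.finrank ℝ V
  let b : Module.Basis (Fin r) ℝ V := Module.finBasis ℝ V
  set w : Fin r → (Fin k → S) := fun i j => c ((b i : Fin k → ℝ) j) with hw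
  have hmap : ∀ y : Fin k → ℝ,
      (fun j => c (F.mulVec y j)) = (F.map c).mulVec (fun l => c (y l)) := by
    intro y
    funext j
    simp only [Matrix.mulVec, dotProduct, Matrix.map_apply, map_sum, map_mul]
  have hbV : ∀ i, (b i : Fin k → ℝ) ∈ V := fun i => (b i).2
  have wmem : ∀ i, w i ∈ LinearMap.range (F.map c).mulVecLin := by
    intro i
    obtain ⟨y, hy⟩ := hbV i
    refine ⟨fun l => c (y l), ?_⟩
    rw [Matrix.mulVecLin_apply, ← hmap]
    rw [hw]
    simp only [Matrix.mulVecLin_apply] at hy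
    rw [hy]
  have hliℝ : LinearIndependent ℝ (fun i => (b i : Fin k → ℝ)) := by
    have := b.linearIndependent
    exact this.map' V.subtype (Submodule.ker_subtype V)
  have hli : LinearIndependent S w := by
    rw [Fintype.linearIndependent_iff]
    intro a ha
    exact hind r _ hliℝ a ha
  have hspan : LinearMap.range (F.map c).mulVecLin = Submodule.span S (Set.range w) := by
    apply le_antisymm
    · rintro x ⟨y, rfl⟩
      have hx : (F.map c).mulVecLin y = ∑ l, y l • (fun j => c (F j l)) := by
        funext j
        simp only [Matrix.mulVecLin_apply, Matrix.mulVec, dotProduct, Matrix.map_apply,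
          Finset.sum_apply, Pi.smul_apply, smul_eq_mul]
        exact Finset.sum_congr rfl fun l _ => mul_comm _ _
      rw [hx]
      apply Submodule.sum_mem
      intro l _
      apply Submodule.smul_mem
      have hcol : (fun j => F j l) ∈ V := ⟨Pi.single l 1, by
        funext j
        simp [Matrix.mulVecLin_apply, Matrix.mulVec, dotProduct, Pi.single_apply]⟩
      have hrep : (fun j => F j l) = ∑ i, (b.repr ⟨_, hcol⟩ i) • (b i : Fin k → ℝ) := by
        have h0 := b.sum_repr ⟨_, hcol⟩
        have h2 := congrArg (Subtype.val) h0
        exact h2.symm.trans (by simp only [AddSubmonoidClass.coe_finset_sum, SetLike.val_smul])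
      have hrep2 : (fun j => c (F j l)) = ∑ i, c (b.repr ⟨_, hcol⟩ i) • w i := by
        funext j
        have := congrFun hrep j
        rw [this]
        simp only [Finset.sum_apply, Pi.smul_apply, smul_eq_mul, map_sum, map_mul, hw]
      rw [hrep2]
      exact Submodule.sum_mem _ fun i _ => Submodule.smul_mem _ _
        (Submodule.subset_span ⟨i, rfl⟩)
    · rw [Submodule.span_le]
      rintro x ⟨i, rfl⟩
      exact wmem i
  rw [hspan]
  exact Module.Free.of_basis (Module.Basis.span hli)

/-! ### Idempotent similarity in Banach algebras -/

section IdemSim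
variable {A : Type*} [NormedRing A] [CompleteSpace A]

/-- similarity relation -/
def IdemSim {A : Type*} [Ring A] (e f : A) : Prop := ∃ u : Aˣ, (u : A) * e = f * u

theorem IdemSim.refl {A : Type*} [Ring A] (e : A) : IdemSim e e := ⟨1, by simp⟩

theorem IdemSim.symm {A : Type*} [Ring A] {e f : A} (h : IdemSim e f) : IdemSim f e := by
  obtain ⟨u, hu⟩ := h
  refine ⟨u⁻¹, ?_⟩
  have := congrArg (fun x => ((u⁻¹ : Aˣ) : A) * x * ((u⁻¹ : Aˣ) : A)) hu
  simpa [mul_assoc, Units.inv_mul, Units.mul_inv, ← mul_assoc] using this.symm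

theorem IdemSim.trans {A : Type*} [Ring A] {e f g : A} (h1 : IdemSim e f) (h2 : IdemSim f g) :
    IdemSim e g := by
  obtain ⟨u, hu⟩ := h1; obtain ⟨v, hv⟩ := h2
  exact ⟨v * u, by rw [Units.val_mul, mul_assoc, hu, ← mul_assoc, hv, mul_assoc]⟩

theorem idem_similar {e f : A} (he : e * e = e) (hf : f * f = f)
    (h : ‖(f - e) * (2 • e - 1)‖ < 1) : IdemSim e f := by
  set t : A := (f - e) * (2 • e - 1) with ht
  have hu : ∃ u : Aˣ, (u : A) = 1 + t := by
    refine ⟨Units.oneSub (-t) (by simpa using h), ?_⟩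
    simp [Units.val_oneSub, sub_neg_eq_add]
  obtain ⟨u, hu⟩ := hu
  refine ⟨u, ?_⟩
  rw [hu, ht]
  have h1 : (1 + (f - e) * (2 • e - 1)) * e = f * e := by
    simp only [two_smul, sub_mul, mul_sub, add_mul, mul_add, one_mul, mul_one, mul_assoc, he, hf]
    abel
  have h2 : f * (1 + (f - e) * (2 • e - 1)) = f * e := by
    simp only [two_smul, sub_mul, mul_sub, add_mul, mul_add, one_mul, mul_one, mul_assoc, he, hf]
    have : f * (f * e) = f * e := by rw [← mul_assoc, hf]
    rw [this]
    abel
  rw [h1, h2]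

theorem idem_similar_near {e f : A} (he : e * e = e) (hf : f * f = f)
    (h : ‖f - e‖ < (‖2 • e - 1‖ + 1)⁻¹) : IdemSim e f := by
  have hC : (0:ℝ) ≤ ‖2 • e - 1‖ := norm_nonneg _
  apply idem_similar he hf
  calc ‖(f - e) * (2 • e - 1)‖ ≤ ‖f - e‖ * ‖2 • e - 1‖ := norm_mul_le _ _
    _ ≤ ‖f - e‖ * (‖2 • e - 1‖ + 1) := by
        apply mul_le_mul_of_nonneg_left (by linarith) (norm_nonneg _)
    _ < (‖2 • e - 1‖ + 1)⁻¹ * (‖2 • e - 1‖ + 1) := by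
        apply mul_lt_mul_of_pos_right h (by linarith)
    _ = 1 := inv_mul_cancel₀ (by linarith)

theorem idem_path_similar {X : Type*} [TopologicalSpace X] [PreconnectedSpace X]
    {E : X → A} (hE : Continuous E) (hidem : ∀ t, E t * E t = E t) (a b : X) :
    IdemSim (E a) (E b) := by
  set S : Set X := {t | IdemSim (E t) (E b)} with hS
  have hδpos : ∀ t : X, (0:ℝ) < (‖2 • E t - 1‖ + 1)⁻¹ := fun t =>
    inv_pos.mpr (by positivity)
  have hnear : ∀ t s : X, ‖E s - E t‖ < (‖2 • E t - 1‖ + 1)⁻¹ → IdemSim (E t) (E s) :=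
    fun t s h => idem_similar_near (hidem t) (hidem s) h
  have hopen : IsOpen S := by
    rw [isOpen_iff_mem_nhds]
    intro t ht
    have hcont : ∀ᶠ s in nhds t, ‖E s - E t‖ < (‖2 • E t - 1‖ + 1)⁻¹ := by
      have : ContinuousAt (fun s => ‖E s - E t‖) t := by fun_prop
      have h0 : ‖E t - E t‖ < (‖2 • E t - 1‖ + 1)⁻¹ := by simpa using hδpos t
      exact this.eventually_lt continuousAt_const h0
    filter_upwards [hcont] with s hs
    exact ((hnear t s hs).symm.trans ht : IdemSim (E s) (E b))
  have hclosed : IsClosed S := by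
    rw [← isOpen_compl_iff, isOpen_iff_mem_nhds]
    intro t ht
    by_contra hmem
    rw [Set.mem_compl_iff] at ht
    have h1 : t ∈ closure S := by
      rw [mem_closure_iff_nhds]
      intro U hU
      by_contra hne
      rw [Set.not_nonempty_iff_eq_empty] at hne
      apply hmem
      filter_upwards [hU] with s hs
      intro hsS
      exact Set.eq_empty_iff_forall_notMem.mp hne s ⟨hs, hsS⟩
    rw [mem_closure_iff_nhds] at h1
    have hcont : {s | ‖E s - E t‖ < (‖2 • E t - 1‖ + 1)⁻¹} ∈ nhds t := by
      have : ContinuousAt (fun s => ‖E s - E t‖) t := by fun_prop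
      have h0 : ‖E t - E t‖ < (‖2 • E t - 1‖ + 1)⁻¹ := by simpa using hδpos t
      exact this.eventually_lt continuousAt_const h0
    obtain ⟨s, hs1, hs2⟩ := h1 _ hcont
    exact ht ((hnear t s hs1).trans hs2)
  have hne : S.Nonempty := ⟨b, IdemSim.refl _⟩
  have hclopen : IsClopen S := ⟨hclosed, hopen⟩
  have : S = Set.univ := hclopen.eq_univ hne
  exact (this ▸ Set.mem_univ a : a ∈ S)

end IdemSim

/-! ### Specifics of `realSymmC` -/

instance (n : ℕ) : CompactSpace (ClosedPolydisc n) := by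
  have h : IsCompact {z : Fin n → ℂ | ∀ j, ‖z j‖ ≤ 1} := by
    have : {z : Fin n → ℂ | ∀ j, ‖z j‖ ≤ 1} = Set.pi Set.univ (fun _ => Metric.closedBall 0 1) := by
      ext z; simp [Set.mem_pi]
    rw [this]
    exact isCompact_univ_pi fun _ => isCompact_closedBall 0 1
  exact isCompact_iff_compactSpace.mp h

lemma isClosed_realSymmC (n : ℕ) : IsClosed ((realSymmC n : Set C(ClosedPolydisc n, ℂ))) := by
  have : ((realSymmC n : Set C(ClosedPolydisc n, ℂ))) =
      ⋂ z, {f : C(ClosedPolydisc n, ℂ) | f z = starRingEnd ℂ (f (polyConj z))} := by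
    ext f; simp [realSymmC, Set.mem_iInter]; rfl
  rw [this]
  refine isClosed_iInter fun z => isClosed_eq ?_ ?_
  · exact ContinuousEvalConst.continuous_eval_const z
  · exact Complex.continuous_conj.comp (ContinuousEvalConst.continuous_eval_const (polyConj z))

instance (n : ℕ) : CompleteSpace (realSymmC n) :=
  (isClosed_realSymmC n).completeSpace_coe

noncomputable def konst (n : ℕ) : ℝ →+* realSymmC n where
  toFun r := ⟨ContinuousMap.const _ (r : ℂ), fun z => by simp [Complex.conj_ofReal]⟩
  map_one' := by ext z; simp
  map_mul' a b := by ext z; simp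
  map_zero' := by ext z; simp
  map_add' a b := by ext z; simp

noncomputable def evalHom (n : ℕ) (z : ClosedPolydisc n) : realSymmC n →+* ℂ where
  toFun f := (f : C(ClosedPolydisc n, ℂ)) z
  map_one' := rfl
  map_mul' a b := rfl
  map_zero' := rfl
  map_add' a b := rfl

lemma hind_realSymmC (n : ℕ) (k m : ℕ) (v : Fin m → (Fin k → ℝ))
    (hv : LinearIndependent ℝ v) (a : Fin m → realSymmC n)
    (ha : (∑ i, a i • (fun j => konst n (v i j))) = 0) : ∀ i, a i = 0 := by
  intro i
  have key : ∀ z : ClosedPolydisc n, ∀ j : Fin k,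
      ∑ i', (evalHom n z (a i')) * (v i' j : ℂ) = 0 := by
    intro z j
    have h1 := congrFun ha j
    have h2 := congrArg (evalHom n z) h1
    simp only [Finset.sum_apply, Pi.smul_apply, smul_eq_mul, map_sum, map_mul, map_zero,
      Pi.zero_apply] at h2
    convert h2 using 2; rfl
  have hvind := Fintype.linearIndependent_iff.mp hv
  have hz : ∀ z : ClosedPolydisc n, evalHom n z (a i) = 0 := by
    intro z
    have hre : ∀ i', (evalHom n z (a i')).re = 0 := by
      apply hvind
      funext j
      have := congrArg Complex.re (key z j)
      simpa [Complex.mul_re, Finset.sum_apply, Pi.smul_apply] using this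
    have him : ∀ i', (evalHom n z (a i')).im = 0 := by
      apply hvind
      funext j
      have := congrArg Complex.im (key z j)
      simpa [Complex.mul_im, Finset.sum_apply, Pi.smul_apply] using this
    exact Complex.ext (hre i) (him i)
  apply Subtype.ext
  ext z
  exact hz z

/-! ### The contraction homotopy -/

def scaleFun (n : ℕ) (t : unitInterval) (z : ClosedPolydisc n) : ClosedPolydisc n :=
  ⟨fun j => ((t : ℝ) : ℂ) * z.1 j, fun j => by
    rw [norm_mul]
    have h1 : ‖((t : ℝ) : ℂ)‖ ≤ 1 := by
      rw [Complex.norm_real]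
      rw [Real.norm_eq_abs, abs_of_nonneg t.2.1]
      exact t.2.2
    have h2 := z.2 j
    calc ‖((t : ℝ) : ℂ)‖ * ‖z.1 j‖ ≤ 1 * 1 :=
      mul_le_mul h1 h2 (norm_nonneg _) zero_le_one
    _ = 1 := one_mul 1⟩

lemma continuous_scaleFun (n : ℕ) :
    Continuous (fun p : unitInterval × ClosedPolydisc n => scaleFun n p.1 p.2) := by
  apply Continuous.subtype_mk
  refine continuous_pi fun j => ?_
  have h1 : Continuous fun p : unitInterval × ClosedPolydisc n => ((p.1 : ℝ) : ℂ) :=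
    Complex.continuous_ofReal.comp (continuous_subtype_val.comp continuous_fst)
  have h2 : Continuous fun p : unitInterval × ClosedPolydisc n => p.2.1 j :=
    (continuous_apply j).comp (continuous_subtype_val.comp continuous_snd)
  exact h1.mul h2

noncomputable def scaleMap (n : ℕ) (t : unitInterval) : C(ClosedPolydisc n, ClosedPolydisc n) :=
  ⟨scaleFun n t, (continuous_scaleFun n).comp (Continuous.prodMk_right t)⟩

lemma polyConj_scale (n : ℕ) (t : unitInterval) (z : ClosedPolydisc n) :
    polyConj (scaleFun n t z) = scaleFun n t (polyConj z) := by
  apply Subtype.ext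
  funext j
  simp [polyConj, scaleFun, map_mul, Complex.conj_ofReal]

noncomputable def phi (n : ℕ) (t : unitInterval) : realSymmC n →+* realSymmC n where
  toFun f := ⟨(f : C(ClosedPolydisc n, ℂ)).comp (scaleMap n t), by
    intro z
    have hf := f.2
    simp only [ContinuousMap.comp_apply]
    have := hf (scaleMap n t z)
    rw [this]
    congr 1
    show (f : C(ClosedPolydisc n, ℂ)) _ = (f : C(ClosedPolydisc n, ℂ)) _
    congr 1
    exact (polyConj_scale n t z)⟩
  map_one' := by apply Subtype.ext; ext z; simp
  map_mul' a b := by apply Subtype.ext; ext z; simp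
  map_zero' := by apply Subtype.ext; ext z; simp
  map_add' a b := by apply Subtype.ext; ext z; simp

lemma phi_one (n : ℕ) (a : realSymmC n) : phi n 1 a = a := by
  apply Subtype.ext
  ext z
  show (a : C(ClosedPolydisc n, ℂ)) (scaleFun n 1 z) = (a : C(ClosedPolydisc n, ℂ)) z
  congr 1
  apply Subtype.ext
  funext j
  simp [scaleFun]

def zZero (n : ℕ) : ClosedPolydisc n := ⟨0, fun j => by simp⟩

lemma val_zZero_real (n : ℕ) (a : realSymmC n) :
    (a : C(ClosedPolydisc n, ℂ)) (zZero n)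
      = (((a : C(ClosedPolydisc n, ℂ)) (zZero n)).re : ℂ) := by
  have h := a.2 (zZero n)
  have hconj : polyConj (zZero n) = zZero n := by
    apply Subtype.ext; funext j; simp [polyConj, zZero]
  rw [hconj] at h
  exact (Complex.conj_eq_iff_re.mp h.symm).symm

lemma phi_zero (n : ℕ) (a : realSymmC n) :
    phi n 0 a = konst n (((a : C(ClosedPolydisc n, ℂ)) (zZero n)).re) := by
  apply Subtype.ext
  ext z
  show (a : C(ClosedPolydisc n, ℂ)) (scaleFun n 0 z) = _
  have hz : scaleFun n 0 z = zZero n := by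
    apply Subtype.ext; funext j; simp [scaleFun, zZero]
  rw [hz]
  exact val_zZero_real n a

lemma continuous_phi_apply (n : ℕ) (a : realSymmC n) :
    Continuous fun t : unitInterval => phi n t a := by
  apply Continuous.subtype_mk
  let G : C(unitInterval × ClosedPolydisc n, ℂ) :=
    ⟨fun p => (a : C(ClosedPolydisc n, ℂ)) (scaleFun n p.1 p.2),
      (a : C(ClosedPolydisc n, ℂ)).continuous.comp (continuous_scaleFun n)⟩
  exact (ContinuousMap.curry G).continuous

end PFhelp

/-! ### Main theorem -/

open PFhelp in
attribute [local instance] Matrix.linftyOpSeminormedAddCommGroup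
  Matrix.linftyOpNormedAddCommGroup Matrix.linftyOpNonUnitalSemiNormedRing
  Matrix.linftyOpNonUnitalNormedRing Matrix.linftyOpNormedRing in
/-- The ring `C_r(cl(𝔻)ⁿ; ℂ)` of real symmetric continuous functions on the closed
polydisc is projective free. -/
theorem projectiveFree_realSymmC (n : ℕ) : ProjectiveFree (realSymmC n) := by
  intro M _ _ hfin hproj
  classical
  obtain ⟨k, e, he, ⟨iso⟩⟩ := finite_projective_iso_range M hfin hproj
  letI : @CompleteSpace (Matrix (Fin k) (Fin k) (realSymmC n)) PseudoMetricSpace.toUniformSpace :=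
    (inferInstanceAs (CompleteSpace (Fin k → Fin k → realSymmC n)))
  -- the path of idempotents
  set E : unitInterval → Matrix (Fin k) (Fin k) (realSymmC n) :=
    fun t => (phi n t).mapMatrix e with hE
  have hEidem : ∀ t, E t * E t = E t := fun t => by
    rw [hE, ← map_mul, he]
  have hEcont : Continuous E := by
    have key : Continuous (X := unitInterval) (Y := Fin k → Fin k → realSymmC n)
        (fun t => E t) :=
      continuous_pi fun i => continuous_pi fun j => continuous_phi_apply n (e i j)
    exact key
  have hsim : IdemSim (E 1) (E 0) := idem_path_similar (X := unitInterval) hEcont hEidem 1 0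
  have hE1 : E 1 = e := by
    apply Matrix.ext
    intro i j
    exact phi_one n (e i j)
  set F : Matrix (Fin k) (Fin k) ℝ :=
    Matrix.of fun i j => (((e i j : C(ClosedPolydisc n, ℂ))) (zZero n)).re with hF
  have hE0 : E 0 = F.map (konst n) := by
    apply Matrix.ext
    intro i j
    exact phi_zero n (e i j)
  rw [hE1, hE0] at hsim
  obtain ⟨u, hu⟩ := hsim
  obtain ⟨iso2⟩ := range_iso_of_similar u hu
  have hfree : Module.Free (realSymmC n) (LinearMap.range ((F.map (konst n)).mulVecLin)) :=
    range_map_free (konst n) F (fun m v hv a ha => hind_realSymmC n k m v hv a ha)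
  exact Module.Free.of_equiv' hfree (iso.trans iso2).symm
end

section
/- If f ∈ ∂^{-N}A satisfies inf_{z ∈ 𝔻^n} |f(z)| > 0, then f is invertible in ∂^{-N}A. -/
open scoped BigOperators

/-- The open unit polydisc `𝔻ⁿ ⊆ ℂⁿ`. -/
def openPolydisc (n : ℕ) : Set (Fin n → ℂ) := { z | ∀ j, ‖z j‖ < 1 }

/-- The closed unit polydisc `cl(𝔻)ⁿ ⊆ ℂⁿ`. -/
def closedPolydisc (n : ℕ) : Set (Fin n → ℂ) := { z | ∀ j, ‖z j‖ ≤ 1 }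

/-- Membership in the polydisc algebra `A`: continuous on the closed polydisc and
holomorphic on the open polydisc. -/
def MemA (n : ℕ) (f : (Fin n → ℂ) → ℂ) : Prop :=
  ContinuousOn f (closedPolydisc n) ∧ DifferentiableOn ℂ f (openPolydisc n)

/-- The complex partial derivative with respect to the `j`-th coordinate. -/
noncomputable def pd {n : ℕ} (j : Fin n) (f : (Fin n → ℂ) → ℂ) : (Fin n → ℂ) → ℂ :=
  fun z => fderiv ℂ f z (Pi.single j 1)

/-- The `m`-fold partial derivative with respect to the `j`-th coordinate. -/
noncomputable def pdPow {n : ℕ} (j : Fin n) : ℕ → ((Fin n → ℂ) → ℂ) → ((Fin n → ℂ) → ℂ)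
  | 0 => id
  | m + 1 => fun f => pd j (pdPow j m f)

/-- The mixed partial derivative `∂^{α₁+⋯+αₙ} f / ∂z₁^{α₁} ⋯ ∂zₙ^{αₙ}`. -/
noncomputable def pdMulti {n : ℕ} (α : Fin n → ℕ) (f : (Fin n → ℂ) → ℂ) :
    (Fin n → ℂ) → ℂ :=
  (List.finRange n).foldr (fun j g => pdPow j (α j) g) f

/-- Membership in `∂^{-N}A`: `f` lies in the polydisc algebra `A` and each of its
complex partial derivatives of total order at most `N` (computed on the open polydisc)
extends to a member of `A`. -/
def MemDN (n N : ℕ) (f : (Fin n → ℂ) → ℂ) : Prop :=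
  MemA n f ∧ ∀ α : Fin n → ℕ, (∑ j, α j) ≤ N →
    ∃ g, MemA n g ∧ ∀ z ∈ openPolydisc n, g z = pdMulti α f z

lemma isOpen_openPolydisc (n : ℕ) : IsOpen (openPolydisc n) := by
  have h : openPolydisc n = ⋂ j, {z : Fin n → ℂ | ‖z j‖ < 1} := by
    ext z; simp [openPolydisc]
  rw [h]
  exact isOpen_iInter_of_finite fun j =>
    isOpen_lt (Continuous.norm (continuous_apply j)) continuous_const

lemma isClosed_closedPolydisc (n : ℕ) : IsClosed (closedPolydisc n) := by
  have h : closedPolydisc n = ⋂ j, {z : Fin n → ℂ | ‖z j‖ ≤ 1} := by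
    ext z; simp [closedPolydisc]
  rw [h]
  exact isClosed_iInter fun j =>
    isClosed_le (Continuous.norm (continuous_apply j)) continuous_const

lemma open_subset_closed (n : ℕ) : openPolydisc n ⊆ closedPolydisc n :=
  fun z hz j => (hz j).le

lemma closed_subset_closure (n : ℕ) : closedPolydisc n ⊆ closure (openPolydisc n) := by
  intro z hz
  have htend : Filter.Tendsto (fun k : ℕ => ((1 - 1/(k+1) : ℝ) : ℂ) • z)
      Filter.atTop (nhds z) := by
    have h1 : Filter.Tendsto (fun k : ℕ => (1 - 1/(k+1) : ℝ)) Filter.atTop (nhds 1) := by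
      have := tendsto_one_div_add_atTop_nhds_zero_nat (𝕜 := ℝ)
      have := (tendsto_const_nhds (x := (1:ℝ)) (f := Filter.atTop (α := ℕ))).sub this
      simpa using this
    have h2 : Filter.Tendsto (fun k : ℕ => ((1 - 1/(k+1) : ℝ) : ℂ)) Filter.atTop (nhds 1) := by
      have h3 := (Complex.continuous_ofReal.tendsto 1).comp h1
      exact h3
    have := h2.smul_const z
    simpa using this
  refine mem_closure_of_tendsto htend (Filter.Eventually.of_forall fun k => ?_)
  intro j
  have hk : (0:ℝ) < 1/(k+1) := by positivity
  have hk1 : (1/(k+1) : ℝ) ≤ 1 := by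
    rw [div_le_one (by positivity)]; linarith [Nat.cast_nonneg (α := ℝ) k]
  have hr0 : (0:ℝ) ≤ 1 - 1/(k+1) := by linarith
  have hr1 : (1 - 1/(k+1) : ℝ) < 1 := by linarith
  have : ‖(((1 - 1/(k+1) : ℝ) : ℂ) • z) j‖ = (1 - 1/(k+1) : ℝ) * ‖z j‖ := by
    rw [Pi.smul_apply, norm_smul, Complex.norm_real, Real.norm_eq_abs, abs_of_nonneg hr0]
  rw [this]
  calc (1 - 1/(k+1) : ℝ) * ‖z j‖ ≤ (1 - 1/(k+1) : ℝ) * 1 :=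
        mul_le_mul_of_nonneg_left (hz j) hr0
    _ < 1 := by linarith

lemma norm_ge_on_closed {n : ℕ} {f : (Fin n → ℂ) → ℂ} {ε : ℝ}
    (hc : ContinuousOn f (closedPolydisc n))
    (h : ∀ z ∈ openPolydisc n, ε ≤ ‖f z‖) :
    ∀ z ∈ closedPolydisc n, ε ≤ ‖f z‖ := by
  intro z hz
  have hS : IsClosed (closedPolydisc n ∩ f ⁻¹' {w : ℂ | ε ≤ ‖w‖}) := by
    refine ContinuousOn.preimage_isClosed_of_isClosed hc (isClosed_closedPolydisc n) ?_
    exact isClosed_le continuous_const continuous_norm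
  have hsub : openPolydisc n ⊆ closedPolydisc n ∩ f ⁻¹' {w : ℂ | ε ≤ ‖w‖} :=
    fun w hw => ⟨open_subset_closed n hw, h w hw⟩
  have := (closure_minimal hsub hS) (closed_subset_closure n hz)
  exact this.2

lemma pd_congr {n : ℕ} {s : Set (Fin n → ℂ)} (hs : IsOpen s)
    {u v : (Fin n → ℂ) → ℂ} (h : Set.EqOn u v s) (j : Fin n) :
    Set.EqOn (pd j u) (pd j v) s := by
  intro z hz
  unfold pd
  rw [Filter.EventuallyEq.fderiv_eq (Filter.eventuallyEq_of_mem (hs.mem_nhds hz) h)]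

lemma pd_add {n : ℕ} {u v : (Fin n → ℂ) → ℂ} {z : Fin n → ℂ}
    (hu : DifferentiableAt ℂ u z) (hv : DifferentiableAt ℂ v z) (j : Fin n) :
    pd j (fun w => u w + v w) z = pd j u z + pd j v z := by
  unfold pd
  rw [fderiv_fun_add hu hv]; rfl

lemma pd_mul {n : ℕ} {u v : (Fin n → ℂ) → ℂ} {z : Fin n → ℂ}
    (hu : DifferentiableAt ℂ u z) (hv : DifferentiableAt ℂ v z) (j : Fin n) :
    pd j (fun w => u w * v w) z = u z * pd j v z + v z * pd j u z := by
  unfold pd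
  rw [fderiv_fun_mul hu hv]
  simp [smul_eq_mul]

lemma pd_const {n : ℕ} (c : ℂ) (j : Fin n) (z : Fin n → ℂ) :
    pd j (fun _ => c) z = 0 := by
  unfold pd
  rw [fderiv_fun_const]; rfl

lemma pd_inv {n : ℕ} {u : (Fin n → ℂ) → ℂ} {s : Set (Fin n → ℂ)} (hs : IsOpen s)
    (hu : DifferentiableOn ℂ u s) (hne : ∀ z ∈ s, u z ≠ 0) (j : Fin n) :
    ∀ z ∈ s, pd j (fun w => (u w)⁻¹) z
      = -1 * pd j u z * ((u z)⁻¹ * (u z)⁻¹) := by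
  intro z hz
  have hduz : DifferentiableAt ℂ u z := (hu z hz).differentiableAt (hs.mem_nhds hz)
  have hdiz : DifferentiableAt ℂ (fun w => (u w)⁻¹) z := hduz.inv (hne z hz)
  have h1 : Set.EqOn (fun w => u w * (u w)⁻¹) (fun _ => (1:ℂ)) s := by
    intro w hw; exact mul_inv_cancel₀ (hne w hw)
  have h2 : pd j (fun w => u w * (u w)⁻¹) z = 0 := by
    rw [pd_congr hs h1 j hz, pd_const]
  rw [pd_mul hduz hdiz j] at h2
  have huz := hne z hz
  field_simp at h2 ⊢
  linear_combination h2

lemma fold_congr {n : ℕ} (α α' : Fin n → ℕ) (h : (Fin n → ℂ) → ℂ) :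
    ∀ L : List (Fin n), (∀ i ∈ L, α i = α' i) →
      L.foldr (fun j g => pdPow j (α j) g) h = L.foldr (fun j g => pdPow j (α' j) g) h := by
  intro L
  induction L with
  | nil => intro _; rfl
  | cons i L ih =>
    intro hL
    simp only [List.foldr_cons]
    rw [ih (fun i' hi' => hL i' (List.mem_cons_of_mem _ hi')),
      hL i ((List.mem_cons_self (a := i) (l := L)))]

lemma fold_zero {n : ℕ} (α : Fin n → ℕ) (h : (Fin n → ℂ) → ℂ) :
    ∀ L : List (Fin n), (∀ i ∈ L, α i = 0) →
      L.foldr (fun j g => pdPow j (α j) g) h = h := by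
  intro L
  induction L with
  | nil => intro _; rfl
  | cons i L ih =>
    intro hL
    simp only [List.foldr_cons]
    rw [ih (fun i' hi' => hL i' (List.mem_cons_of_mem _ hi')),
      hL i ((List.mem_cons_self (a := i) (l := L)))]
    rfl

lemma pdMulti_zero {n : ℕ} (α : Fin n → ℕ) (hα : ∀ i, α i = 0)
    (h : (Fin n → ℂ) → ℂ) : pdMulti α h = h :=
  fold_zero α h _ (fun i _ => hα i)

lemma fold_peel {n : ℕ} (α : Fin n → ℕ) (j : Fin n) (hj : 0 < α j)
    (h : (Fin n → ℂ) → ℂ) :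
    ∀ L : List (Fin n), List.Pairwise (· < ·) L → j ∈ L →
      (∀ i ∈ L, i < j → α i = 0) →
      L.foldr (fun i g => pdPow i (α i) g) h
        = pd j (L.foldr (fun i g => pdPow i (Function.update α j (α j - 1) i) g) h) := by
  intro L
  induction L with
  | nil => intro _ hm; exact absurd hm List.not_mem_nil
  | cons i L ih =>
    intro hpw hm hsmall
    have hpw' := hpw.of_cons
    have hlt : ∀ x ∈ L, i < x := fun x hx => (List.pairwise_cons.mp hpw).1 x hx
    rcases List.mem_cons.mp hm with rfl | hmL
    · -- head is j
      have hjL : j ∉ L := fun hjL => lt_irrefl j (hlt j hjL)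
      simp only [List.foldr_cons]
      have hcong : L.foldr (fun i g => pdPow i (Function.update α j (α j - 1) i) g) h
          = L.foldr (fun i g => pdPow i (α i) g) h := by
        refine fold_congr _ _ h L fun i' hi' => ?_
        exact Function.update_of_ne (fun he => hjL (by rwa [he] at hi')) _ _
      rw [hcong, Function.update_self]
      obtain ⟨m, hm'⟩ : ∃ m, α j = m + 1 := ⟨α j - 1, (Nat.succ_pred_eq_of_pos hj).symm⟩
      rw [hm', Nat.add_sub_cancel]
      rfl
    · -- head i ≠ j, j ∈ L, so i < j and α i = 0
      have hij : i < j := hlt j hmL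
      have hai : α i = 0 := hsmall i ((List.mem_cons_self (a := i) (l := L))) hij
      have hai' : Function.update α j (α j - 1) i = 0 := by
        rw [Function.update_of_ne (ne_of_lt hij)]; exact hai
      simp only [List.foldr_cons, hai, hai']
      exact ih hpw' hmL (fun i' hi' hlt' => hsmall i' (List.mem_cons_of_mem _ hi') hlt')

lemma pdMulti_peel {n : ℕ} (α : Fin n → ℕ) (j : Fin n) (hj : 0 < α j)
    (hsmall : ∀ i : Fin n, i < j → α i = 0) (h : (Fin n → ℂ) → ℂ) :
    pdMulti α h = pd j (pdMulti (Function.update α j (α j - 1)) h) := by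
  unfold pdMulti
  rw [fold_peel α j hj h (List.finRange n) (List.pairwise_lt_finRange n)
    (List.mem_finRange j) (fun i _ hi => hsmall i hi)]

lemma pdMulti_single {n : ℕ} (j : Fin n) (h : (Fin n → ℂ) → ℂ) :
    pdMulti (Function.update (fun _ => 0) j 1) h = pd j h := by
  rw [pdMulti_peel (Function.update (fun _ => 0) j 1) j (by simp) (fun i hi => by
    rw [Function.update_of_ne (ne_of_lt hi)]) h]
  have h0 : ∀ i, Function.update (Function.update (fun _ : Fin n => (0:ℕ)) j 1) j
      (Function.update (fun _ : Fin n => (0:ℕ)) j 1 j - 1) i = 0 := by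
    intro i
    by_cases hij : i = j
    · subst hij; simp
    · simp [Function.update_of_ne hij]
  rw [pdMulti_zero _ h0 h]

inductive InG (n : ℕ) (f : (Fin n → ℂ) → ℂ) : ℕ → ℕ → ((Fin n → ℂ) → ℂ) → Prop
  | deriv (k j₀ : ℕ) (β : Fin n → ℕ) (h1 : (∑ i, β i) ≤ k)
      (h2 : ∀ i : Fin n, (i : ℕ) < j₀ → β i = 0) : InG n f k j₀ (pdMulti β f)
  | inv (k j₀ : ℕ) : InG n f k j₀ (fun z => (f z)⁻¹)
  | const (k j₀ : ℕ) (c : ℂ) : InG n f k j₀ (fun _ => c)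
  | add (k j₀ : ℕ) (u v : (Fin n → ℂ) → ℂ) :
      InG n f k j₀ u → InG n f k j₀ v → InG n f k j₀ (fun z => u z + v z)
  | mul (k j₀ : ℕ) (u v : (Fin n → ℂ) → ℂ) :
      InG n f k j₀ u → InG n f k j₀ v → InG n f k j₀ (fun z => u z * v z)

lemma InG.mono {n : ℕ} {f : (Fin n → ℂ) → ℂ} {k j₀ : ℕ} {u : (Fin n → ℂ) → ℂ}
    (h : InG n f k j₀ u) : ∀ {k' j₀' : ℕ}, k ≤ k' → j₀' ≤ j₀ → InG n f k' j₀' u := by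
  induction h with
  | deriv β h1 h2 =>
    intro k' j₀' hk hj
    exact InG.deriv k' j₀' β (le_trans h1 hk) (fun i hi => h2 i (lt_of_lt_of_le hi hj))
  | inv => intro k' j₀' _ _; exact InG.inv k' j₀'
  | const c => intro k' j₀' _ _; exact InG.const k' j₀' c
  | add u v hu hv ihu ihv =>
    intro k' j₀' hk hj; exact InG.add k' j₀' u v (ihu hk hj) (ihv hk hj)
  | mul u v hu hv ihu ihv =>
    intro k' j₀' hk hj; exact InG.mul k' j₀' u v (ihu hk hj) (ihv hk hj)

lemma InG.diff {n N : ℕ} {f : (Fin n → ℂ) → ℂ} (hf : MemDN n N f)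
    (hne : ∀ z ∈ openPolydisc n, f z ≠ 0) {k j₀ : ℕ} {u : (Fin n → ℂ) → ℂ}
    (h : InG n f k j₀ u) : k ≤ N → DifferentiableOn ℂ u (openPolydisc n) := by
  induction h with
  | deriv β h1 h2 =>
    intro hk
    obtain ⟨g, hg, hgeq⟩ := hf.2 β (le_trans h1 hk)
    exact hg.2.congr (fun z hz => (hgeq z hz).symm)
  | inv => intro _; exact hf.1.2.inv hne
  | const c => intro _; exact differentiableOn_const c
  | add u v hu hv ihu ihv => intro hk; exact (ihu hk).add (ihv hk)
  | mul u v hu hv ihu ihv => intro hk; exact (ihu hk).mul (ihv hk)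

lemma InG.ext {n N : ℕ} {f : (Fin n → ℂ) → ℂ} (hf : MemDN n N f)
    (hfinv : MemA n (fun z => (f z)⁻¹)) {k j₀ : ℕ} {u : (Fin n → ℂ) → ℂ}
    (h : InG n f k j₀ u) : k ≤ N →
    ∃ g, MemA n g ∧ Set.EqOn g u (openPolydisc n) := by
  induction h with
  | deriv β h1 h2 =>
    intro hk
    obtain ⟨g, hg, hgeq⟩ := hf.2 β (le_trans h1 hk)
    exact ⟨g, hg, fun z hz => hgeq z hz⟩
  | inv => intro _; exact ⟨_, hfinv, fun z hz => rfl⟩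
  | const c => intro _; exact ⟨fun _ => c, ⟨continuousOn_const, differentiableOn_const c⟩,
      fun z hz => rfl⟩
  | add u v hu hv ihu ihv =>
    intro hk
    obtain ⟨gu, hgu, hequ⟩ := ihu hk
    obtain ⟨gv, hgv, heqv⟩ := ihv hk
    exact ⟨fun z => gu z + gv z, ⟨hgu.1.add hgv.1, hgu.2.add hgv.2⟩,
      fun z hz => by simp only []; rw [hequ hz, heqv hz]⟩
  | mul u v hu hv ihu ihv =>
    intro hk
    obtain ⟨gu, hgu, hequ⟩ := ihu hk
    obtain ⟨gv, hgv, heqv⟩ := ihv hk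
    exact ⟨fun z => gu z * gv z, ⟨hgu.1.mul hgv.1, hgu.2.mul hgv.2⟩,
      fun z hz => by simp only []; rw [hequ hz, heqv hz]⟩

lemma InG.pdStep {n N : ℕ} {f : (Fin n → ℂ) → ℂ} (hf : MemDN n N f)
    (hne : ∀ z ∈ openPolydisc n, f z ≠ 0) (j : Fin n) {k j₀ : ℕ}
    {u : (Fin n → ℂ) → ℂ} (h : InG n f k j₀ u) :
    k < N → (j : ℕ) ≤ j₀ →
    ∃ v, InG n f (k+1) (j : ℕ) v ∧ Set.EqOn (pd j u) v (openPolydisc n) := by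
  induction h with
  | deriv β h1 h2 =>
    intro hk hj
    refine ⟨pdMulti (Function.update β j (β j + 1)) f, ?_, ?_⟩
    · refine InG.deriv _ _ _ ?_ ?_
      · rw [Finset.sum_update_of_mem (Finset.mem_univ j)]
        have h5 : (∑ i ∈ Finset.univ \ {j}, β i) + β j = ∑ i, β i :=
          (Finset.sum_eq_sum_sdiff_singleton_add (Finset.mem_univ j) β).symm
        omega
      · intro i hi
        have hij : i ≠ j := by
          intro he; subst he; omega
        rw [Function.update_of_ne hij]
        exact h2 i (lt_of_lt_of_le hi hj)
    · have hpeel : pdMulti (Function.update β j (β j + 1)) f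
          = pd j (pdMulti (Function.update (Function.update β j (β j + 1)) j
              (Function.update β j (β j + 1) j - 1)) f) := by
        refine pdMulti_peel _ j (by simp) (fun i hi => ?_) f
        rw [Function.update_of_ne (ne_of_lt hi)]
        exact h2 i (lt_of_lt_of_le (by exact_mod_cast hi) hj)
      have hupd : Function.update (Function.update β j (β j + 1)) j
          (Function.update β j (β j + 1) j - 1) = β := by
        funext i
        by_cases hij : i = j
        · subst hij; simp
        · simp [Function.update_of_ne hij]
      rw [hpeel, hupd]
      exact fun z _ => rfl
  | inv =>
    intro hk hj
    refine ⟨fun z => ((-1 : ℂ) * pdMulti (Function.update (fun _ => 0) j 1) f z)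
        * ((f z)⁻¹ * (f z)⁻¹), ?_, ?_⟩
    · exact InG.mul _ _ _ _
        (InG.mul _ _ _ _ (InG.const _ _ (-1))
          (InG.deriv _ _ _ (by
            rw [show (∑ i, Function.update (fun _ : Fin n => (0:ℕ)) j 1 i) = 1 by
              rw [Finset.sum_update_of_mem (Finset.mem_univ j)]; simp]
            omega) (fun i hi => by
            have hij : i ≠ j := by
              intro he; subst he; omega
            rw [Function.update_of_ne hij])))
        (InG.mul _ _ _ _ (InG.inv _ _) (InG.inv _ _))
    · intro z hz
      rw [pd_inv (isOpen_openPolydisc n) hf.1.2 hne j z hz, pdMulti_single]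
  | const c =>
    intro _ _
    exact ⟨fun _ => 0, InG.const _ _ 0, fun z _ => pd_const c j z⟩
  | add u v hu hv ihu ihv =>
    intro hk hj
    obtain ⟨vu, hvu, hequ⟩ := ihu hk hj
    obtain ⟨vv, hvv, heqv⟩ := ihv hk hj
    refine ⟨fun z => vu z + vv z, InG.add _ _ _ _ hvu hvv, fun z hz => ?_⟩
    have hdu := (InG.diff hf hne hu (le_of_lt hk)).differentiableAt
      ((isOpen_openPolydisc n).mem_nhds hz)
    have hdv := (InG.diff hf hne hv (le_of_lt hk)).differentiableAt
      ((isOpen_openPolydisc n).mem_nhds hz)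
    rw [pd_add hdu hdv j, hequ hz, heqv hz]
  | mul u v hu hv ihu ihv =>
    intro hk hj
    obtain ⟨vu, hvu, hequ⟩ := ihu hk hj
    obtain ⟨vv, hvv, heqv⟩ := ihv hk hj
    refine ⟨fun z => u z * vv z + v z * vu z,
      InG.add _ _ _ _
        (InG.mul _ _ _ _ (hu.mono (Nat.le_succ k) hj) hvv)
        (InG.mul _ _ _ _ (hv.mono (Nat.le_succ k) hj) hvu),
      fun z hz => ?_⟩
    have hdu := (InG.diff hf hne hu (le_of_lt hk)).differentiableAt
      ((isOpen_openPolydisc n).mem_nhds hz)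
    have hdv := (InG.diff hf hne hv (le_of_lt hk)).differentiableAt
      ((isOpen_openPolydisc n).mem_nhds hz)
    rw [pd_mul hdu hdv j, hequ hz, heqv hz]

lemma main_lemma {n N : ℕ} {f : (Fin n → ℂ) → ℂ} (hf : MemDN n N f)
    (hne : ∀ z ∈ openPolydisc n, f z ≠ 0) :
    ∀ m, m ≤ N → ∀ α : Fin n → ℕ, (∑ i, α i) = m →
      ∀ j₀ : ℕ, (∀ i : Fin n, (i : ℕ) < j₀ → α i = 0) →
      ∃ v, InG n f m j₀ v ∧
        Set.EqOn (pdMulti α (fun z => (f z)⁻¹)) v (openPolydisc n) := by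
  intro m
  induction m with
  | zero =>
    intro _ α hα j₀ _
    have hz : ∀ i, α i = 0 := by
      intro i
      exact Finset.sum_eq_zero_iff.mp hα i (Finset.mem_univ i)
    rw [pdMulti_zero α hz]
    exact ⟨_, InG.inv _ _, fun z _ => rfl⟩
  | succ m ih =>
    intro hm α hα j₀ hj₀
    classical
    have hex : ∃ i : Fin n, α i ≠ 0 := by
      by_contra hcon
      push_neg at hcon
      rw [Finset.sum_eq_zero (fun i _ => hcon i)] at hα
      omega
    let S := Finset.univ.filter (fun i => α i ≠ 0)
    have hSne : S.Nonempty := ⟨hex.choose, by simp [S, hex.choose_spec]⟩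
    set j := S.min' hSne with hjdef
    have hαj : α j ≠ 0 := by
      have := S.min'_mem hSne
      simpa [S] using this
    have hmin : ∀ i : Fin n, i < j → α i = 0 := by
      intro i hi
      by_contra hcon
      exact absurd (S.min'_le i (by simp [S, hcon])) (not_le.mpr hi)
    have hj₀j : j₀ ≤ (j : ℕ) := by
      by_contra hcon
      push_neg at hcon
      exact hαj (hj₀ j hcon)
    have hsum' : (∑ i, Function.update α j (α j - 1) i) = m := by
      rw [Finset.sum_update_of_mem (Finset.mem_univ j)]
      have h5 : (∑ i ∈ Finset.univ \ {j}, α i) + α j = ∑ i, α i :=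
        (Finset.sum_eq_sum_sdiff_singleton_add (Finset.mem_univ j) α).symm
      omega
    have hmin' : ∀ i : Fin n, (i : ℕ) < (j : ℕ) → Function.update α j (α j - 1) i = 0 := by
      intro i hi
      have hij : i < j := hi
      rw [Function.update_of_ne (ne_of_lt hij)]
      exact hmin i hij
    obtain ⟨v', hv', heq'⟩ := ih (le_trans (Nat.le_succ m) hm)
      (Function.update α j (α j - 1)) hsum' (j : ℕ) hmin'
    obtain ⟨v, hv, heqv⟩ := InG.pdStep hf hne j hv'
      (lt_of_lt_of_le (Nat.lt_succ_self m) hm) (le_refl _)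
    refine ⟨v, hv.mono (le_refl _) hj₀j, fun z hz => ?_⟩
    rw [pdMulti_peel α j (Nat.pos_of_ne_zero hαj) hmin (fun z => (f z)⁻¹)]
    rw [pd_congr (isOpen_openPolydisc n) heq' j hz]
    exact heqv hz

/-- If `f ∈ ∂^{-N}A` satisfies `inf_{z ∈ 𝔻ⁿ} |f z| > 0`, then `f` is invertible in
`∂^{-N}A`. -/
theorem memDN_inverse_of_inf_pos (n N : ℕ) (hN : 0 < N)
    (f : (Fin n → ℂ) → ℂ) (hf : MemDN n N f)
    (hinf : ∃ ε > (0 : ℝ), ∀ z ∈ openPolydisc n, ε ≤ ‖f z‖) :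
    ∃ g, MemDN n N g ∧ ∀ z ∈ closedPolydisc n, f z * g z = 1 := by
  obtain ⟨ε, hε, hεf⟩ := hinf
  have hnec : ∀ z ∈ closedPolydisc n, f z ≠ 0 := by
    intro z hz h0
    have := norm_ge_on_closed hf.1.1 hεf z hz
    rw [h0, norm_zero] at this
    linarith
  have hne : ∀ z ∈ openPolydisc n, f z ≠ 0 := fun z hz => hnec z (open_subset_closed n hz)
  have hfinvA : MemA n (fun z => (f z)⁻¹) := ⟨hf.1.1.inv₀ hnec, hf.1.2.inv hne⟩
  refine ⟨fun z => (f z)⁻¹, ⟨hfinvA, ?_⟩, fun z hz => mul_inv_cancel₀ (hnec z hz)⟩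
  intro α hα
  obtain ⟨v, hv, heq⟩ := main_lemma hf hne (∑ i, α i) hα α rfl 0
    (fun i hi => absurd hi (Nat.not_lt_zero _))
  obtain ⟨g, hg, hgeq⟩ := InG.ext hf hfinvA hv hα
  exact ⟨g, hg, fun z hz => by rw [hgeq hz]; exact (heq hz).symm⟩
end

section
/- If U(0) ∈ ℂ^{k×k} is invertible with U(0)·conj(U(0)) = I, and log U(0) = X + iY with X, Y real matrices obtained by the holomorphic functional calculus (so XY = YX), then e^{2X} = I. -/
open NormedSpace

/-- If `U₀ ∈ ℂ^{k×k}` is invertible with `U₀ ⬝ conj U₀ = I` and `log U₀ = X + iY` with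
`X`, `Y` real commuting matrices (so `U₀ = e^{X + iY}` with `XY = YX`), then
`e^{2X} = I`. -/
theorem exp_two_X_eq_one (k : ℕ) (U₀ : Matrix (Fin k) (Fin k) ℂ)
    (hU : IsUnit U₀.det) (h : U₀ * U₀.map (starRingEnd ℂ) = 1)
    (X Y : Matrix (Fin k) (Fin k) ℝ) (hcomm : X * Y = Y * X)
    (hlog : U₀ = exp (X.map (Complex.ofReal ·) + Complex.I • Y.map (Complex.ofReal ·))) :
    exp ((2 : ℝ) • X) = 1 := by
  letI : SeminormedRing (Matrix (Fin k) (Fin k) ℂ) := Matrix.linftyOpSemiNormedRing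
  letI : NormedRing (Matrix (Fin k) (Fin k) ℂ) := Matrix.linftyOpNormedRing
  letI : NormedAlgebra ℂ (Matrix (Fin k) (Fin k) ℂ) := Matrix.linftyOpNormedAlgebra
  letI : NormedAlgebra ℝ (Matrix (Fin k) (Fin k) ℂ) := Matrix.linftyOpNormedAlgebra
  letI : SeminormedRing (Matrix (Fin k) (Fin k) ℝ) := Matrix.linftyOpSemiNormedRing
  letI : NormedRing (Matrix (Fin k) (Fin k) ℝ) := Matrix.linftyOpNormedRing
  letI : NormedAlgebra ℝ (Matrix (Fin k) (Fin k) ℝ) := Matrix.linftyOpNormedAlgebra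
  set X' : Matrix (Fin k) (Fin k) ℂ := X.map (Complex.ofReal ·) with hX'
  set Y' : Matrix (Fin k) (Fin k) ℂ := Y.map (Complex.ofReal ·) with hY'
  have hc : X' * Y' = Y' * X' := by
    have : (X.map ⇑Complex.ofRealHom) * (Y.map ⇑Complex.ofRealHom)
        = (Y.map ⇑Complex.ofRealHom) * (X.map ⇑Complex.ofRealHom) := by
      rw [← Matrix.map_mul, ← Matrix.map_mul, hcomm]
    exact this
  -- commuting
  have c2 : Commute (X' + Complex.I • Y') (X' - Complex.I • Y') := by
    show _ * _ = _ * _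
    simp only [add_mul, mul_add, sub_mul, mul_sub, smul_mul_assoc, Matrix.mul_smul, hc]
    abel
  -- conjugation of exp
  have hmapconj : (exp (X' + Complex.I • Y')).map (starRingEnd ℂ)
      = exp (X' - Complex.I • Y') := by
    have hcont : Continuous ((starRingEnd ℂ).mapMatrix :
        Matrix (Fin k) (Fin k) ℂ →+* Matrix (Fin k) (Fin k) ℂ) := by
      exact Continuous.matrix_map continuous_id Complex.continuous_conj
    letI : NormedAlgebra ℚ (Matrix (Fin k) (Fin k) ℂ) := Matrix.linftyOpNormedAlgebra
    have := map_exp ((starRingEnd ℂ).mapMatrix (m := Fin k)) hcont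
      (X' + Complex.I • Y')
    simp only [RingHom.mapMatrix_apply] at this
    erw [this]
    congr 1
    ext i j
    simp [hX', hY', Matrix.map_apply, Matrix.add_apply, Matrix.sub_apply, Complex.conj_ofReal,
      sub_eq_add_neg, mul_comm]
  have hprod : exp (X' + Complex.I • Y') * exp (X' - Complex.I • Y')
      = exp ((2 : ℂ) • X') := by
    rw [← Matrix.exp_add_of_commute _ _ c2]
    congr 1
    rw [two_smul]
    abel
  have key : exp ((2 : ℂ) • X') = 1 := by
    rw [← hprod, ← hmapconj, ← hlog]
    exact h
  -- transfer to ℝ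
  have hmapR : (exp ((2 : ℝ) • X)).map (algebraMap ℝ ℂ) = exp ((2 : ℂ) • X') := by
    have hcont : Continuous ((algebraMap ℝ ℂ).mapMatrix :
        Matrix (Fin k) (Fin k) ℝ →+* Matrix (Fin k) (Fin k) ℂ) :=
      Continuous.matrix_map continuous_id (continuous_algebraMap ℝ ℂ)
    letI : NormedAlgebra ℚ (Matrix (Fin k) (Fin k) ℝ) := Matrix.linftyOpNormedAlgebra
    have h1 := map_exp ((algebraMap ℝ ℂ).mapMatrix (m := Fin k)) hcont ((2 : ℝ) • X)
    simp only [RingHom.mapMatrix_apply] at h1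
    erw [h1]
    congr 1
    ext i j
    simp [hX', Matrix.map_apply, Matrix.smul_apply, Complex.real_smul]
  rw [key] at hmapR
  have hinj : Function.Injective (fun M : Matrix (Fin k) (Fin k) ℝ =>
      M.map (algebraMap ℝ ℂ)) := Matrix.map_injective Complex.ofReal_injective
  apply hinj
  simp only [hmapR]
  ext i j
  by_cases hij : i = j <;> simp [Matrix.one_apply, hij]
end
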